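/- Let M be an index-ℓ sublattice of ℤ[ω] (ℓ prime), v a shortest nonzero vector of M, and w a shortest vector of M outside ℝ·v. (a) If |v|² ≤ (√3/2)ℓ then |w|² ≥ (√3/2)ℓ. (b) If |v|² ≤ (3/4)ℓ then |w|² ≥ ℓ. -/

import Mathlib

/-- The primitive cube root of unity `ω = e^{2πi/3}`. -/
noncomputable def ω : ℂ := Complex.exp (2 * Real.pi * Complex.I / 3)

/-- The Eisenstein lattice `ℤ[ω] ⊂ ℂ`. -/
noncomputable def Eisenstein : AddSubgroup ℂ := AddSubgroup.closure {1, ω}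

lemma omega_arg : (2 * Real.pi * Complex.I / 3) = ((2 * Real.pi / 3 : ℝ) : ℂ) * Complex.I := by
  push_cast; ring

lemma omega_re : ω.re = -(1/2) := by
  rw [ω, omega_arg, Complex.exp_ofReal_mul_I_re,
    show (2 * Real.pi / 3) = Real.pi - Real.pi / 3 by ring,
    Real.cos_pi_sub, Real.cos_pi_div_three]

lemma omega_im : ω.im = Real.sqrt 3 / 2 := by
  rw [ω, omega_arg, Complex.exp_ofReal_mul_I_im,
    show (2 * Real.pi / 3) = Real.pi - Real.pi / 3 by ring,
    Real.sin_pi_sub, Real.sin_pi_div_three]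

lemma eisenstein_rep {x : ℂ} (hx : x ∈ Eisenstein) : ∃ a b : ℤ, x = a + b * ω := by
  induction hx using AddSubgroup.closure_induction with
  | mem y hy =>
      rcases hy with rfl | rfl
      · exact ⟨1, 0, by push_cast; ring⟩
      · exact ⟨0, 1, by push_cast; ring⟩
  | zero => exact ⟨0, 0, by push_cast; ring⟩
  | add x y hx hy ihx ihy =>
      obtain ⟨a, b, h1⟩ := ihx; obtain ⟨c, d, h2⟩ := ihy
      exact ⟨a + c, b + d, by rw [h1, h2]; push_cast; ring⟩
  | neg x hx ihx =>
      obtain ⟨a, b, h1⟩ := ihx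
      exact ⟨-a, -b, by rw [h1]; push_cast; ring⟩

lemma one_mem_E : (1 : ℂ) ∈ Eisenstein := AddSubgroup.subset_closure (by simp)
lemma omega_mem_E : ω ∈ Eisenstein := AddSubgroup.subset_closure (by simp)

lemma det_dvd (ℓ : ℕ) (hℓ : ℓ.Prime) (M : AddSubgroup ℂ) (hM : M ≤ Eisenstein)
    (hidx : (M.addSubgroupOf Eisenstein).index = ℓ)
    {v w : ℂ} (hv : v ∈ M) (hw : w ∈ M) {a b c d : ℤ}
    (hva : v = a + b * ω) (hwc : w = c + d * ω) : (ℓ : ℤ) ∣ (a * d - b * c) := by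
  set H := M.addSubgroupOf Eisenstein with hH
  by_contra hnd
  set φ : Eisenstein →+ Eisenstein ⧸ H := QuotientAddGroup.mk' H with hφ
  set α := φ ⟨1, one_mem_E⟩ with hα
  set β := φ ⟨ω, omega_mem_E⟩ with hβ
  have hrep : ∀ (p q : ℤ) (h : ((p : ℂ) + q * ω) ∈ Eisenstein),
      φ ⟨_, h⟩ = p • α + q • β := by
    intro p q h
    have hx : (⟨_, h⟩ : Eisenstein) = p • ⟨1, one_mem_E⟩ + q • ⟨ω, omega_mem_E⟩ := by
      apply Subtype.ext
      push_cast [zsmul_eq_mul]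
      ring
    rw [hx, map_add, map_zsmul, map_zsmul]
  have hker : ∀ x : ℂ, (h : x ∈ Eisenstein) → x ∈ M → φ ⟨x, h⟩ = 0 := by
    intro x h hxM
    rw [hφ, QuotientAddGroup.mk'_apply, QuotientAddGroup.eq_zero_iff]
    exact AddSubgroup.mem_addSubgroupOf.mpr hxM
  have hvQ : a • α + b • β = 0 := by
    rw [← hrep a b (hva ▸ hM hv)]
    exact hker _ _ (hva ▸ hv)
  have hwQ : c • α + d • β = 0 := by
    rw [← hrep c d (hwc ▸ hM hw)]
    exact hker _ _ (hwc ▸ hw)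
  have hℓall : ∀ q : Eisenstein ⧸ H, (ℓ : ℤ) • q = 0 := by
    intro q
    obtain ⟨x, rfl⟩ := QuotientAddGroup.mk'_surjective H q
    have h1 : (ℓ : ℤ) • (QuotientAddGroup.mk' H) x = φ (ℓ • x) := by
      rw [hφ, natCast_zsmul, map_nsmul]
    rw [h1, hφ, QuotientAddGroup.mk'_apply, QuotientAddGroup.eq_zero_iff]
    have h2 := AddSubgroup.nsmul_index_mem H x
    rw [hidx] at h2
    simpa using h2
  have hDα : (a * d - b * c) • α = 0 := by
    have key : (a * d - b * c) • α =
        d • (a • α + b • β) - b • (c • α + d • β) := by module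
    rw [key, hvQ, hwQ, smul_zero, smul_zero, sub_zero]
  have hDβ : (a * d - b * c) • β = 0 := by
    have key : (a * d - b * c) • β =
        a • (c • α + d • β) - c • (a • α + b • β) := by module
    rw [key, hvQ, hwQ, smul_zero, smul_zero, sub_zero]
  obtain ⟨u, t, hut⟩ := ((Nat.prime_iff_prime_int.mp hℓ).coprime_iff_not_dvd.mpr hnd)
  have hA : α = 0 := by
    calc α = (u * (ℓ : ℤ) + t * (a * d - b * c)) • α := by rw [hut, one_smul]
    _ = u • ((ℓ : ℤ) • α) + t • ((a * d - b * c) • α) := by module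
    _ = 0 := by rw [hℓall, hDα, smul_zero, smul_zero, add_zero]
  have hB : β = 0 := by
    calc β = (u * (ℓ : ℤ) + t * (a * d - b * c)) • β := by rw [hut, one_smul]
    _ = u • ((ℓ : ℤ) • β) + t • ((a * d - b * c) • β) := by module
    _ = 0 := by rw [hℓall, hDβ, smul_zero, smul_zero, add_zero]
  have hall : ∀ q : Eisenstein ⧸ H, q = 0 := by
    intro q
    obtain ⟨x, rfl⟩ := QuotientAddGroup.mk'_surjective H q
    obtain ⟨p, r, hpr⟩ := eisenstein_rep x.2
    have hx : (x : ℂ) ∈ Eisenstein := x.2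
    have hx2 : x = ⟨(p : ℂ) + r * ω, hpr ▸ hx⟩ := Subtype.ext hpr
    rw [show (QuotientAddGroup.mk' H) x = φ x from rfl, hx2, hrep, hA, hB]
    simp
  haveI : Subsingleton (Eisenstein ⧸ H) := ⟨fun x y => by rw [hall x, hall y]⟩
  haveI : Unique (Eisenstein ⧸ H) := uniqueOfSubsingleton 0
  have h1 : H.index = 1 := by rw [AddSubgroup.index_eq_card, Nat.card_unique]
  exact hℓ.ne_one (by rw [← hidx, h1])


/-- Let `M` be an index-`ℓ` sublattice of `ℤ[ω]` (`ℓ` prime), `v` a shortest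
nonzero vector of `M`, and `w` a shortest vector of `M` outside `ℝ·v`.
(a) If `|v|² ≤ (√3/2)ℓ` then `|w|² ≥ (√3/2)ℓ`.
(b) If `|v|² ≤ (3/4)ℓ` then `|w|² ≥ ℓ`. -/
theorem second_minimum_lower_bound (ℓ : ℕ) (hℓ : ℓ.Prime)
    (M : AddSubgroup ℂ) (hM : M ≤ Eisenstein)
    (hidx : (M.addSubgroupOf Eisenstein).index = ℓ)
    (v w : ℂ) (hv : v ∈ M) (hvne : v ≠ 0)
    (hvmin : ∀ u ∈ M, u ≠ 0 → ‖v‖ ≤ ‖u‖)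
    (hw : w ∈ M) (hwout : ¬ ∃ r : ℝ, w = (r : ℂ) * v)
    (hwmin : ∀ u ∈ M, (¬ ∃ r : ℝ, u = (r : ℂ) * v) →
      ‖w‖ ≤ ‖u‖) :
    (‖v‖ ^ 2 ≤ (Real.sqrt 3 / 2) * ℓ →
      (Real.sqrt 3 / 2) * ℓ ≤ ‖w‖ ^ 2) ∧
    (‖v‖ ^ 2 ≤ (3 / 4) * ℓ → (ℓ : ℝ) ≤ ‖w‖ ^ 2) := by
  obtain ⟨a, b, hvab⟩ := eisenstein_rep (hM hv)
  obtain ⟨c, d, hwcd⟩ := eisenstein_rep (hM hw)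
  have hdvd := det_dvd ℓ hℓ M hM hidx hv hw hvab hwcd
  have him : (starRingEnd ℂ v * w).im = Real.sqrt 3 / 2 * ((a * d - b * c : ℤ) : ℝ) := by
    rw [hvab, hwcd]
    simp only [Complex.mul_im, Complex.mul_re, Complex.add_re, Complex.add_im,
      Complex.conj_re, Complex.conj_im, map_add, map_mul, Complex.intCast_re,
      Complex.intCast_im, omega_re, omega_im, Complex.conj_ofReal]
    push_cast
    ring
  have hDne : (a * d - b * c : ℤ) ≠ 0 := by
    intro h0
    apply hwout
    have hns : Complex.normSq v ≠ 0 := fun h => hvne (Complex.normSq_eq_zero.mp h)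
    refine ⟨(starRingEnd ℂ v * w).re / Complex.normSq v, ?_⟩
    have him0 : (starRingEnd ℂ v * w).im = 0 := by rw [him, h0]; simp
    have hre : (((starRingEnd ℂ v * w).re : ℝ) : ℂ) = starRingEnd ℂ v * w :=
      Complex.ext (by simp) (by simp [him0])
    push_cast
    rw [hre]
    have hnsC : (Complex.normSq v : ℂ) ≠ 0 := by exact_mod_cast hns
    rw [div_mul_eq_mul_div, eq_div_iff hnsC]
    linear_combination (-w) * (Complex.mul_conj v)
  have hlabs : Real.sqrt 3 / 2 * ℓ ≤ ‖v‖ * ‖w‖ := by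
    have h1 : (ℓ : ℤ) ≤ |a * d - b * c| := Int.le_of_dvd (abs_pos.mpr hDne) ((dvd_abs _ _).mpr hdvd)
    have h2 : (ℓ : ℝ) ≤ |((a * d - b * c : ℤ) : ℝ)| := by exact_mod_cast h1
    have h3 : (0:ℝ) ≤ Real.sqrt 3 / 2 := by positivity
    have h4 := mul_le_mul_of_nonneg_left h2 h3
    have h5 : Real.sqrt 3 / 2 * |((a * d - b * c : ℤ) : ℝ)| = |(starRingEnd ℂ v * w).im| := by
      rw [him, abs_mul, abs_of_nonneg h3]
    have h6 : |(starRingEnd ℂ v * w).im| ≤ ‖starRingEnd ℂ v * w‖ :=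
      Complex.abs_im_le_norm _
    have h7 : ‖starRingEnd ℂ v * w‖ = ‖v‖ * ‖w‖ := by
      rw [norm_mul, Complex.norm_conj]
    linarith
  have hvpos : 0 < ‖v‖ := norm_pos_iff.mpr hvne
  have hwabs : 0 ≤ ‖w‖ := norm_nonneg w
  have h3 : Real.sqrt 3 ^ 2 = 3 := Real.sq_sqrt (by norm_num)
  have hs3 : 0 < Real.sqrt 3 := Real.sqrt_pos.mpr (by norm_num)
  have hℓpos : (0:ℝ) < ℓ := by exact_mod_cast hℓ.pos
  constructor
  · intro h
    nlinarith [hlabs, h, hvpos, hwabs, hs3, hℓpos, h3,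
      mul_le_mul hlabs hlabs (by positivity) (by positivity),
      mul_le_mul_of_nonneg_right h (mul_self_nonneg ‖w‖),
      mul_pos (by positivity : (0:ℝ) < Real.sqrt 3 / 2 * ℓ) hℓpos]
  · intro h
    nlinarith [hlabs, h, hvpos, hwabs, hs3, hℓpos, h3,
      mul_le_mul hlabs hlabs (by positivity) (by positivity),
      mul_le_mul_of_nonneg_right h (mul_self_nonneg ‖w‖),
      mul_pos hℓpos hℓpos]
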